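/- For all integers p ≥ q ≥ 2 with p + q = n, if 2pq − 1 ≤ ⌊(n−1)²/2⌋ + ⌊(n−1)/2⌋ (so that q_{n,n−1}(2pq − 1) is finite), then q_{n,n}(2pq − 1) < q_{n,n−1}(2pq − 1) + (n − 1), where q_{n,n−1} denotes the function q_{m+1,m} with m = n − 1. -/
import Mathlib


open Classical in
/-- The quantum lower bound function `q_{n,n}` for the Khovanov homology of `T(n,n)`:
`+∞` outside `[0, ⌊n²/2⌋]`, `n² - 2n` at `h = 0`, and `n² + 2⌈h/2⌉ - 2p` for
`2(p+1)(q-1) < h ≤ 2pq` where `p ≥ q ≥ 1`, `p + q = n` (with `q = n - p`). -/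
noncomputable def qnn (n h : ℤ) : WithTop ℤ :=
  if h < 0 ∨ n ^ 2 / 2 < h then ⊤
  else if h = 0 then ((n ^ 2 - 2 * n : ℤ) : WithTop ℤ)
  else if hc : ∃ p : ℤ, n - p ≤ p ∧ 1 ≤ n - p ∧
      2 * (p + 1) * (n - p - 1) < h ∧ h ≤ 2 * p * (n - p)
    then ((n ^ 2 + 2 * ((h + 1) / 2) - 2 * hc.choose : ℤ) : WithTop ℤ)
  else ⊤

open Classical in
/-- The quantum lower bound function `q_{n+1,n}` for the Khovanov homology of `T(n+1,n)`:
`+∞` outside `[0, ⌊n²/2⌋ + ⌊n/2⌋]`; `q_{n,n}(h) + n - 3` at `h = 2pq + 1 ≤ ⌊n²/2⌋`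
(`p ≥ q ≥ 1`, `p + q = n`); `q_{n,n}(h) + n - 1` at other `h` with `0 ≤ h ≤ ⌊n²/2⌋`;
and `⌊n²/2⌋ + 2h - 1` for `⌊n²/2⌋ ≤ h ≤ ⌊n²/2⌋ + ⌊n/2⌋`. -/
noncomputable def qn1n (n h : ℤ) : WithTop ℤ :=
  if h < 0 ∨ n ^ 2 / 2 + n / 2 < h then ⊤
  else if ∃ p : ℤ, n - p ≤ p ∧ 1 ≤ n - p ∧ h = 2 * p * (n - p) + 1 ∧ h ≤ n ^ 2 / 2
    then qnn n h + ((n - 3 : ℤ) : WithTop ℤ)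
  else if h ≤ n ^ 2 / 2 then qnn n h + ((n - 1 : ℤ) : WithTop ℤ)
  else ((n ^ 2 / 2 + 2 * h - 1 : ℤ) : WithTop ℤ)

lemma qnn_interval_unique {n h p₁ p₂ : ℤ}
    (h1 : n - p₁ ≤ p₁) (h3 : 2 * (p₁ + 1) * (n - p₁ - 1) < h) (h4 : h ≤ 2 * p₁ * (n - p₁))
    (g1 : n - p₂ ≤ p₂) (g3 : 2 * (p₂ + 1) * (n - p₂ - 1) < h) (g4 : h ≤ 2 * p₂ * (n - p₂)) :
    p₁ = p₂ := by
  by_contra hne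
  rcases lt_or_gt_of_ne hne with hlt | hlt
  · nlinarith [mul_nonneg (by linarith : (0:ℤ) ≤ p₂ - p₁ - 1) (by linarith : (0:ℤ) ≤ p₁ + 1 + p₂ - n)]
  · nlinarith [mul_nonneg (by linarith : (0:ℤ) ≤ p₁ - p₂ - 1) (by linarith : (0:ℤ) ≤ p₂ + 1 + p₁ - n)]

lemma qnn_eval (n p h : ℤ) (h1 : n - p ≤ p) (h2 : 1 ≤ n - p)
    (h3 : 2 * (p + 1) * (n - p - 1) < h) (h4 : h ≤ 2 * p * (n - p)) (h0 : 0 < h) :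
    qnn n h = ((n ^ 2 + 2 * ((h + 1) / 2) - 2 * p : ℤ) : WithTop ℤ) := by
  have hub : h ≤ n ^ 2 / 2 := by
    rw [Int.le_ediv_iff_mul_le (by norm_num)]
    nlinarith [sq_nonneg (2 * p - n)]
  rw [qnn]
  split_ifs with hA hB hc
  · exact absurd hA (by push_neg; exact ⟨h0.le, hub⟩)
  · exact absurd hB (by omega)
  · have hcs := hc.choose_spec
    have : hc.choose = p := qnn_interval_unique hcs.1 hcs.2.2.1 hcs.2.2.2 h1 h3 h4
    rw [this]
  · exact absurd ⟨p, h1, h2, h3, h4⟩ hc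

lemma qnn_top_of_no_interval (n h : ℤ) (h0 : 0 < h)
    (hC : ¬ ∃ p : ℤ, n - p ≤ p ∧ 1 ≤ n - p ∧
      2 * (p + 1) * (n - p - 1) < h ∧ h ≤ 2 * p * (n - p)) :
    qnn n h = ⊤ := by
  rw [qnn]
  split_ifs with hA hB
  · rfl
  · exact absurd hB (by omega)
  · rfl

/-- Addendum to Lemma 5.3: inequality (d) is strict at `h = 2pq - 1` for `p ≥ q ≥ 2`,
`p + q = n`, provided `2pq - 1 ≤ ⌊(n-1)²/2⌋ + ⌊(n-1)/2⌋`. -/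
theorem qnn_lt_qn1n_add_at_2pq_sub_one (n p q : ℤ) (hpq : q ≤ p) (hq : 2 ≤ q)
    (hsum : p + q = n) (hmax : 2 * p * q - 1 ≤ (n - 1) ^ 2 / 2 + (n - 1) / 2) :
    qnn n (2 * p * q - 1) < qn1n (n - 1) (2 * p * q - 1) + ((n - 1 : ℤ) : WithTop ℤ) := by
  subst hsum
  have hp : 2 ≤ p := le_trans hq hpq
  have h0 : (0:ℤ) < 2 * p * q - 1 := by nlinarith
  have hLHS : qnn (p + q) (2 * p * q - 1)
      = (((p + q) ^ 2 + 2 * (p * q) - 2 * p : ℤ) : WithTop ℤ) := by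
    rw [qnn_eval (p + q) p _ (by omega) (by omega) (by nlinarith) (by nlinarith) h0]
    rw [show (2 * p * q - 1 + 1) = (p * q) * 2 by ring, Int.mul_ediv_cancel _ (by norm_num)]
  rw [hLHS, qn1n]
  split_ifs with hT hE hle
  · exact absurd hT (by push_neg; exact ⟨h0.le, hmax⟩)
  · -- case A1 : h = 2 p' q' + 1
    obtain ⟨p', hg1, hg2, hg3, hg4⟩ := hE
    have hp' : p' ≤ p - 2 := by
      by_contra hcon
      push_neg at hcon
      have ha : p - 1 ≤ p' := by omega
      rcases eq_or_lt_of_le ha with h' | h'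
      · rw [← h'] at hg3; nlinarith
      · nlinarith [mul_nonneg (by linarith : (0:ℤ) ≤ p' - p) (by linarith : (0:ℤ) ≤ p' - q)]
    by_cases hC : ∃ x : ℤ, (p + q - 1) - x ≤ x ∧ 1 ≤ (p + q - 1) - x ∧
        2 * (x + 1) * ((p + q - 1) - x - 1) < 2 * p * q - 1 ∧
        2 * p * q - 1 ≤ 2 * x * ((p + q - 1) - x)
    · obtain ⟨x, hx1, hx2, hx3, hx4⟩ := hC
      have hxb : x ≤ p' - 1 := by
        by_contra hcon
        push_neg at hcon
        nlinarith [mul_nonneg (by linarith : (0:ℤ) ≤ x - p') (by linarith : (0:ℤ) ≤ x + p' - (p + q - 1))]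
      rw [qnn_eval (p + q - 1) x _ hx1 hx2 hx3 hx4 h0,
        show (2 * p * q - 1 + 1) = (p * q) * 2 by ring, Int.mul_ediv_cancel _ (by norm_num),
        ← WithTop.coe_add, ← WithTop.coe_add, WithTop.coe_lt_coe]
      nlinarith
    · rw [qnn_top_of_no_interval _ _ h0 hC, WithTop.top_add, WithTop.top_add]
      exact WithTop.coe_lt_top _
  · -- case A2
    by_cases hC : ∃ x : ℤ, (p + q - 1) - x ≤ x ∧ 1 ≤ (p + q - 1) - x ∧
        2 * (x + 1) * ((p + q - 1) - x - 1) < 2 * p * q - 1 ∧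
        2 * p * q - 1 ≤ 2 * x * ((p + q - 1) - x)
    · obtain ⟨x, hx1, hx2, hx3, hx4⟩ := hC
      have hxb : x ≤ p - 2 := by
        by_contra hcon
        push_neg at hcon
        nlinarith [mul_nonneg (by linarith : (0:ℤ) ≤ x - (p - 1)) (by linarith : (0:ℤ) ≤ x - q)]
      rw [qnn_eval (p + q - 1) x _ hx1 hx2 hx3 hx4 h0,
        show (2 * p * q - 1 + 1) = (p * q) * 2 by ring, Int.mul_ediv_cancel _ (by norm_num),
        ← WithTop.coe_add, ← WithTop.coe_add, WithTop.coe_lt_coe]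
      nlinarith
    · rw [qnn_top_of_no_interval _ _ h0 hC, WithTop.top_add, WithTop.top_add]
      exact WithTop.coe_lt_top _
  · -- case B
    push_neg at hle
    rw [← WithTop.coe_add, WithTop.coe_lt_coe]
    have gen : ∀ t : ℤ, (t * 2 + 1) / 2 = t := fun t => by omega
    rcases Int.even_or_odd (p + q - 1) with ⟨L, hL⟩ | ⟨L, hL⟩
    · -- p + q - 1 = 2L
      have hm : p + q - 1 = 2 * L := by omega
      have hK : (p + q - 1) ^ 2 / 2 = 2 * L ^ 2 := by
        rw [hm, show (2 * L) ^ 2 = (2 * L ^ 2) * 2 by ring, Int.mul_ediv_cancel _ (by norm_num)]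
      have hL2 : (p + q - 1) / 2 = L := by omega
      rw [hK]
      rw [hK] at hle
      rw [hK, hL2] at hmax
      have hd : q + 1 ≤ p := by omega
      have hd2 : (p - q) ^ 2 ≤ 4 * L - 3 := by nlinarith
      have hsq : (p + q) ^ 2 = (2 * L + 1) ^ 2 := by rw [show p + q = 2 * L + 1 by omega]
      rcases eq_or_lt_of_le hd with h1 | h2
      · have hp1 : p = q + 1 := by omega
        have hLq : L = q := by omega
        subst hp1 hLq
        nlinarith
      · nlinarith [hd2, hsq]
    · -- p + q - 1 = 2L + 1
      have hm : p + q - 1 = 2 * L + 1 := hL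
      have hK : (p + q - 1) ^ 2 / 2 = 2 * L ^ 2 + 2 * L := by
        rw [hm, show (2 * L + 1) ^ 2 = (2 * L ^ 2 + 2 * L) * 2 + 1 by ring, gen]
      have hL2 : (p + q - 1) / 2 = L := by omega
      rw [hK]
      rw [hK] at hle
      rw [hK, hL2] at hmax
      have hL1 : 1 ≤ L := by omega
      have hne : q + 1 ≤ p := by
        by_contra hcon
        have hpq' : p = q := by omega
        subst hpq'
        have hq' : p = L + 1 := by omega
        subst hq'
        nlinarith
      have hd : q + 2 ≤ p := by omega
      have hd2 : (p - q) ^ 2 ≤ 4 * L := by nlinarith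
      have hsq : (p + q) ^ 2 = (2 * L + 2) ^ 2 := by rw [show p + q = 2 * L + 2 by omega]
      rcases eq_or_lt_of_le hd with h1 | h2
      · have hp1 : p = q + 2 := by omega
        have hLq : L = q := by omega
        subst hp1 hLq
        nlinarith
      · nlinarith [hd2, hsq]
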